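/- There exists an instance of the capacitated flow-processing problem for which the optimal-allocation value function J₃ is not submodular. Concretely, with nodes {v₁, v₂, v₃}, each of capacity 3, and flows f₁, f₂, f₃, each of rate 2, with path sets V_{f₁} = {v₁, v₂}, V_{f₂} = {v₂, v₃}, V_{f₃} = {v₁, v₃}, one has J₃({v₂, v₃}) − J₃({v₂}) = 4 > 2 = J₃({v₃}) − J₃(∅). -/

import Mathlib

/-- The optimal-allocation value function `J₃`: maximum total rate of fully
processed flows, over capacity-feasible assignments to VNF-nodes in `U`. -/
noncomputable def J3 {V F : Type} [Fintype V] [Fintype F] [DecidableEq V]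
    (c : V → ℝ) (rate : F → ℝ) (path : F → Finset V) (U : Finset V) : ℝ :=
  sSup {x : ℝ | ∃ a : F → V → ℝ,
    (∀ f v, 0 ≤ a f v) ∧
    (∀ f v, v ∉ path f ∩ U → a f v = 0) ∧
    (∀ v ∈ U, ∑ f, a f v ≤ c v) ∧
    x = ∑ f, if rate f ≤ ∑ v ∈ path f ∩ U, a f v then rate f else 0}

section aux

abbrev cc : Fin 3 → ℝ := fun _ => 3
abbrev rr : Fin 3 → ℝ := fun _ => 2
abbrev pp : Fin 3 → Finset (Fin 3) := ![{0, 1}, {1, 2}, {0, 2}]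

/-- allocation witnessing `J3 {1,2} = 6` -/
noncomputable def A12 : Fin 3 → Fin 3 → ℝ := fun f v =>
  if f = 0 ∧ v = 1 then 2 else
  if f = 1 ∧ v = 1 then 1 else
  if f = 1 ∧ v = 2 then 1 else
  if f = 2 ∧ v = 2 then 2 else 0

lemma J3_12 : J3 cc rr pp {1, 2} = 6 := by
  apply IsGreatest.csSup_eq
  constructor
  · refine ⟨A12, ?_, ?_, ?_, ?_⟩
    · intro f v; unfold A12; split_ifs <;> norm_num
    · intro f v hv
      fin_cases f <;> fin_cases v <;>
        simp_all [A12] <;> norm_num [Fin.ext_iff]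
    · intro v hv
      rw [Fin.sum_univ_three]
      fin_cases hv <;> norm_num [A12, Fin.ext_iff]
    · rw [Fin.sum_univ_three]
      have i0 : pp 0 ∩ ({1, 2} : Finset (Fin 3)) = {1} := by decide
      have i1 : pp 1 ∩ ({1, 2} : Finset (Fin 3)) = {1, 2} := by decide
      have i2 : pp 2 ∩ ({1, 2} : Finset (Fin 3)) = {2} := by decide
      rw [i0, i1, i2, Finset.sum_pair (show (1 : Fin 3) ≠ 2 by decide)]
      norm_num [A12, Fin.ext_iff]
  · rintro x ⟨a, ha0, hz, hcap, rfl⟩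
    rw [Fin.sum_univ_three]
    have h0 : (if rr 0 ≤ ∑ v ∈ pp 0 ∩ {1, 2}, a 0 v then rr 0 else 0) ≤ 2 := by
      split_ifs <;> norm_num
    have h1 : (if rr 1 ≤ ∑ v ∈ pp 1 ∩ {1, 2}, a 1 v then rr 1 else 0) ≤ 2 := by
      split_ifs <;> norm_num
    have h2 : (if rr 2 ≤ ∑ v ∈ pp 2 ∩ {1, 2}, a 2 v then rr 2 else 0) ≤ 2 := by
      split_ifs <;> norm_num
    linarith

lemma J3_1 : J3 cc rr pp {1} = 2 := by
  apply IsGreatest.csSup_eq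
  constructor
  · refine ⟨fun f v => if f = 0 ∧ v = 1 then 2 else 0, ?_, ?_, ?_, ?_⟩
    · intro f v; dsimp only; split_ifs <;> norm_num
    · intro f v hv
      dsimp only; split_ifs with h
      · exact absurd (h.1 ▸ h.2 ▸ hv) (by decide)
      · rfl
    · intro v hv
      rw [Fin.sum_univ_three]
      fin_cases hv <;> norm_num [Fin.ext_iff]
    · rw [Fin.sum_univ_three]
      have i0 : pp 0 ∩ ({1} : Finset (Fin 3)) = {1} := by decide
      have i1 : pp 1 ∩ ({1} : Finset (Fin 3)) = {1} := by decide
      have i2 : pp 2 ∩ ({1} : Finset (Fin 3)) = ∅ := by decide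
      rw [i0, i1, i2]
      norm_num [Fin.ext_iff]
  · rintro x ⟨a, ha0, hz, hcap, rfl⟩
    rw [Fin.sum_univ_three]
    have i0 : pp 0 ∩ ({1} : Finset (Fin 3)) = {1} := by decide
    have i1 : pp 1 ∩ ({1} : Finset (Fin 3)) = {1} := by decide
    have i2 : pp 2 ∩ ({1} : Finset (Fin 3)) = ∅ := by decide
    rw [i0, i1, i2]
    simp only [Finset.sum_singleton, Finset.sum_empty]
    have hcap1 := hcap 1 (by decide)
    rw [Fin.sum_univ_three] at hcap1
    simp only [cc] at hcap1
    have h2 := ha0 2 1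
    split_ifs with hA hB hB <;> simp only [rr] at * <;> norm_num <;> linarith

lemma J3_2 : J3 cc rr pp {2} = 2 := by
  apply IsGreatest.csSup_eq
  constructor
  · refine ⟨fun f v => if f = 1 ∧ v = 2 then 2 else 0, ?_, ?_, ?_, ?_⟩
    · intro f v; dsimp only; split_ifs <;> norm_num
    · intro f v hv
      dsimp only; split_ifs with h
      · exact absurd (h.1 ▸ h.2 ▸ hv) (by decide)
      · rfl
    · intro v hv
      rw [Fin.sum_univ_three]
      fin_cases hv <;> norm_num [Fin.ext_iff]
    · rw [Fin.sum_univ_three]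
      have i0 : pp 0 ∩ ({2} : Finset (Fin 3)) = ∅ := by decide
      have i1 : pp 1 ∩ ({2} : Finset (Fin 3)) = {2} := by decide
      have i2 : pp 2 ∩ ({2} : Finset (Fin 3)) = {2} := by decide
      rw [i0, i1, i2]
      norm_num [Fin.ext_iff]
  · rintro x ⟨a, ha0, hz, hcap, rfl⟩
    rw [Fin.sum_univ_three]
    have i0 : pp 0 ∩ ({2} : Finset (Fin 3)) = ∅ := by decide
    have i1 : pp 1 ∩ ({2} : Finset (Fin 3)) = {2} := by decide
    have i2 : pp 2 ∩ ({2} : Finset (Fin 3)) = {2} := by decide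
    rw [i0, i1, i2]
    simp only [Finset.sum_singleton, Finset.sum_empty]
    have hcap2 := hcap 2 (by decide)
    rw [Fin.sum_univ_three] at hcap2
    simp only [cc] at hcap2
    have h0 := ha0 0 2
    split_ifs with hA hB hB <;> simp only [rr] at * <;> norm_num <;> split_ifs <;> linarith

lemma J3_0 : J3 cc rr pp ∅ = 0 := by
  apply IsGreatest.csSup_eq
  constructor
  · refine ⟨fun _ _ => 0, fun _ _ => le_refl 0, fun _ _ _ => rfl,
      fun v hv => absurd hv (by simp), ?_⟩
    rw [Fin.sum_univ_three]
    norm_num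
  · rintro x ⟨a, ha0, hz, hcap, rfl⟩
    rw [Fin.sum_univ_three]
    norm_num

end aux

/-- The three-node, three-flow instance (capacities 3, rates 2, triangle paths)
witnesses non-submodularity of `J₃`:
`J₃({v₂,v₃}) − J₃({v₂}) = 4 > 2 = J₃({v₃}) − J₃(∅)`. -/
theorem J3_not_submodular_instance :
    let c : Fin 3 → ℝ := fun _ => 3
    let rate : Fin 3 → ℝ := fun _ => 2
    let path : Fin 3 → Finset (Fin 3) := ![{0, 1}, {1, 2}, {0, 2}]
    J3 c rate path {1, 2} - J3 c rate path {1} = 4 ∧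
    J3 c rate path {2} - J3 c rate path (∅ : Finset (Fin 3)) = 2 ∧
    (4 : ℝ) > 2 := by
  intro c rate path
  refine ⟨?_, ?_, by norm_num⟩
  · show J3 cc rr pp {1, 2} - J3 cc rr pp {1} = 4
    rw [J3_12, J3_1]; norm_num
  · show J3 cc rr pp {2} - J3 cc rr pp ∅ = 2
    rw [J3_2, J3_0]; norm_num
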